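/- Let p ∈ frontier Z. Suppose there exist an open neighborhood U of p, ρ > 0, and a function a : ℝ → ℝ that is continuous and strictly positive on (0, ρ] with t ↦ (a t)⁻¹ Lebesgue integrable on (0, ρ), such that ‖∇f x‖ ≥ a (f x) for every x ∈ U with 0 < f x ≤ ρ. Then p is KŁ nondegenerate; indeed, the function Ψ t := ∫ r in (0, t), (a r)⁻¹ satisfies Ψ 0 = 0, is continuous on [0, ρ], is differentiable on (0, ρ) with deriv Ψ t = (a t)⁻¹ > 0 and deriv Ψ continuous there, and deriv Ψ (f x) * ‖∇f x‖ ≥ 1 for every x ∈ U with 0 < f x < ρ. -/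

import Mathlib

open Set MeasureTheory

variable {n : ℕ}

def KLNondeg (f : EuclideanSpace ℝ (Fin n) → ℝ) (p : EuclideanSpace ℝ (Fin n)) : Prop :=
  ∃ ρ > (0:ℝ), ∃ U : Set (EuclideanSpace ℝ (Fin n)), IsOpen U ∧ p ∈ U ∧
    ∃ Ψ : ℝ → ℝ, Ψ 0 = 0 ∧ ContinuousOn Ψ (Ico 0 ρ) ∧
      (∀ t ∈ Ioo (0:ℝ) ρ, DifferentiableAt ℝ Ψ t) ∧
      (∀ t ∈ Ioo (0:ℝ) ρ, 0 < deriv Ψ t) ∧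
      ContinuousOn (deriv Ψ) (Ioo 0 ρ) ∧
      ∀ x ∈ U, 0 < f x → f x < ρ → 1 ≤ deriv Ψ (f x) * ‖gradient f x‖

theorem gradient_inequality_implies_KL (n : ℕ) (hn : 1 ≤ n)
    (f : EuclideanSpace ℝ (Fin n) → ℝ)
    (hf : Continuous f) (hf0 : ∀ x, 0 ≤ f x)
    (hZ : (f ⁻¹' {0}).Nonempty)
    (hC1 : ContDiffOn ℝ 1 f (f ⁻¹' {0})ᶜ)
    (p : EuclideanSpace ℝ (Fin n)) (hp : p ∈ frontier (f ⁻¹' {0}))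
    (U : Set (EuclideanSpace ℝ (Fin n))) (hU : IsOpen U) (hpU : p ∈ U)
    (ρ : ℝ) (hρ : 0 < ρ)
    (a : ℝ → ℝ) (ha_cont : ContinuousOn a (Ioc 0 ρ))
    (ha_pos : ∀ t ∈ Ioc (0:ℝ) ρ, 0 < a t)
    (ha_int : IntegrableOn (fun t => (a t)⁻¹) (Ioo 0 ρ))
    (hgrad : ∀ x ∈ U, 0 < f x → f x ≤ ρ → a (f x) ≤ ‖gradient f x‖) :
    (fun t => ∫ r in Ioo (0:ℝ) t, (a r)⁻¹) 0 = 0 ∧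
    ContinuousOn (fun t => ∫ r in Ioo (0:ℝ) t, (a r)⁻¹) (Icc 0 ρ) ∧
    (∀ t ∈ Ioo (0:ℝ) ρ,
        DifferentiableAt ℝ (fun t => ∫ r in Ioo (0:ℝ) t, (a r)⁻¹) t ∧
        deriv (fun t => ∫ r in Ioo (0:ℝ) t, (a r)⁻¹) t = (a t)⁻¹ ∧
        0 < deriv (fun t => ∫ r in Ioo (0:ℝ) t, (a r)⁻¹) t) ∧
    ContinuousOn (deriv (fun t => ∫ r in Ioo (0:ℝ) t, (a r)⁻¹)) (Ioo 0 ρ) ∧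
    (∀ x ∈ U, 0 < f x → f x < ρ →
        1 ≤ deriv (fun t => ∫ r in Ioo (0:ℝ) t, (a r)⁻¹) (f x) * ‖gradient f x‖) ∧
    KLNondeg f p := by
  set g : ℝ → ℝ := fun r => (a r)⁻¹ with hg
  set Ψ : ℝ → ℝ := fun t => ∫ r in Ioo (0:ℝ) t, g r with hΨdef
  have hΨIoc : Ψ = fun t => ∫ r in Ioc (0:ℝ) t, g r := by
    funext t; exact (integral_Ioc_eq_integral_Ioo).symm
  have hg_cont : ContinuousOn g (Ioo 0 ρ) :=
    ((ha_cont.mono Ioo_subset_Ioc_self).inv₀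
      (fun t ht => (ha_pos t (Ioo_subset_Ioc_self ht)).ne'))
  have hΨ0 : Ψ 0 = 0 := by simp [hΨdef]
  have hΨcont : ContinuousOn Ψ (Icc 0 ρ) := by
    rw [hΨIoc]
    exact intervalIntegral.continuousOn_primitive
      ((integrableOn_Icc_iff_integrableOn_Ioo).2 ha_int)
  have hderiv : ∀ t ∈ Ioo (0:ℝ) ρ, HasDerivAt Ψ (g t) t := by
    intro t ht
    have hsub : Ioc (0:ℝ) t ⊆ Ioo 0 ρ := fun r hr => ⟨hr.1, hr.2.trans_lt ht.2⟩
    have hii : IntervalIntegrable g volume 0 t :=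
      (intervalIntegrable_iff_integrableOn_Ioc_of_le ht.1.le).2 (ha_int.mono_set hsub)
    have hF : HasDerivAt (fun u => ∫ r in (0:ℝ)..u, g r) (g t) t :=
      intervalIntegral.integral_hasDerivAt_right hii
        (hg_cont.stronglyMeasurableAtFilter isOpen_Ioo t ht)
        (hg_cont.continuousAt (isOpen_Ioo.mem_nhds ht))
    refine hF.congr_of_eventuallyEq ?_
    filter_upwards [isOpen_Ioi.mem_nhds ht.1] with u (hu : 0 < u)
    rw [hΨdef]
    simp only
    rw [← integral_Ioc_eq_integral_Ioo, intervalIntegral.integral_of_le hu.le]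
  have hderiv_eq : ∀ t ∈ Ioo (0:ℝ) ρ, deriv Ψ t = g t := fun t ht => (hderiv t ht).deriv
  have hmain : ∀ t ∈ Ioo (0:ℝ) ρ,
      DifferentiableAt ℝ Ψ t ∧ deriv Ψ t = (a t)⁻¹ ∧ 0 < deriv Ψ t := by
    intro t ht
    refine ⟨(hderiv t ht).differentiableAt, hderiv_eq t ht, ?_⟩
    rw [hderiv_eq t ht]
    exact inv_pos.2 (ha_pos t (Ioo_subset_Ioc_self ht))
  have hdcont : ContinuousOn (deriv Ψ) (Ioo 0 ρ) :=
    hg_cont.congr hderiv_eq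
  have hineq : ∀ x ∈ U, 0 < f x → f x < ρ → 1 ≤ deriv Ψ (f x) * ‖gradient f x‖ := by
    intro x hx hfx hfxρ
    have haf : 0 < a (f x) := ha_pos _ ⟨hfx, hfxρ.le⟩
    rw [hderiv_eq (f x) ⟨hfx, hfxρ⟩, inv_mul_eq_div]
    exact (one_le_div haf).2 (hgrad x hx hfx hfxρ.le)
  refine ⟨hΨ0, hΨcont, hmain, hdcont, hineq, ρ, hρ, U, hU, hpU, Ψ, hΨ0,
    hΨcont.mono Ico_subset_Icc_self, fun t ht => (hmain t ht).1,
    fun t ht => (hmain t ht).2.2, hdcont, hineq⟩
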